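/- arXiv:1203.5638 — 2 statements merged into one kernel-verified Lean document; each statement's English description precedes it below -/
import Mathlib

section
/- Let A and B be two n×n real positive semidefinite matrices. Then there exists an invertible n×n real matrix S such that both S A Sᵀ and S B Sᵀ are diagonal matrices. -/
open Matrix

namespace SimDiagAux

variable {n : ℕ}

lemma star_eq_transpose (M : Matrix (Fin n) (Fin n) ℝ) : star M = Mᵀ := by
  ext i j
  simp [Matrix.star_apply]

lemma conjT_eq_transpose (M : Matrix (Fin n) (Fin n) ℝ) : Mᴴ = Mᵀ := by
  ext i j
  simp [Matrix.conjTranspose_apply]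

lemma psd_congr {M S : Matrix (Fin n) (Fin n) ℝ} (hM : M.PosSemidef) :
    (S * M * Sᵀ).PosSemidef := by
  have := hM.mul_mul_conjTranspose_same S
  rwa [conjT_eq_transpose] at this

lemma psd_diag_nonneg {M : Matrix (Fin n) (Fin n) ℝ} (hM : M.PosSemidef) (i : Fin n) :
    0 ≤ M i i := by
  have h := hM.dotProduct_mulVec_nonneg (Pi.single i 1)
  simpa [mulVec, dotProduct, Pi.single_apply] using h

lemma psd_row_eq_zero {M : Matrix (Fin n) (Fin n) ℝ} (hM : M.PosSemidef) {i : Fin n}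
    (hii : M i i = 0) (j : Fin n) : M i j = 0 := by
  have h0 : star (Pi.single i 1 : Fin n → ℝ) ⬝ᵥ M *ᵥ Pi.single i 1 = 0 := by
    simpa [mulVec, dotProduct, Pi.single_apply] using hii
  have h := (hM.dotProduct_mulVec_zero_iff _).mp h0
  have h3 : M j i = 0 := by
    simpa [mulVec, dotProduct, Pi.single_apply] using congrFun h j
  have hsymm : M i j = M j i := by
    conv_lhs => rw [← hM.1]
    simp [Matrix.conjTranspose_apply]
  rw [hsymm, h3]

/-- A PSD real matrix is congruent to a diagonal matrix with entries 0 or 1. -/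
lemma psd_congr_diag01 {C : Matrix (Fin n) (Fin n) ℝ} (hC : C.PosSemidef) :
    ∃ S : Matrix (Fin n) (Fin n) ℝ, IsUnit S ∧ ∃ d : Fin n → ℝ,
      (∀ i, d i = 0 ∨ d i = 1) ∧ S * C * Sᵀ = diagonal d := by
  classical
  have h := hC.1
  set U : Matrix (Fin n) (Fin n) ℝ := (h.eigenvectorUnitary : Matrix (Fin n) (Fin n) ℝ) with hU
  set lam : Fin n → ℝ := h.eigenvalues with hlam
  have hlamnn : ∀ i, 0 ≤ lam i := fun i => hC.eigenvalues_nonneg i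
  set e : Fin n → ℝ := fun i => if lam i = 0 then 1 else (Real.sqrt (lam i))⁻¹ with he
  have hene : ∀ i, e i ≠ 0 := by
    intro i
    rw [he]
    dsimp only
    by_cases hl : lam i = 0
    · rw [if_pos hl]; norm_num
    · rw [if_neg hl]
      exact inv_ne_zero (Real.sqrt_ne_zero'.mpr (lt_of_le_of_ne (hlamnn i) (Ne.symm hl)))
  have hUstar : star U * U = 1 := Matrix.mem_unitaryGroup_iff'.mp h.eigenvectorUnitary.2
  have hUU : U * star U = 1 := Matrix.mem_unitaryGroup_iff.mp h.eigenvectorUnitary.2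
  have hUnit1 : IsUnit (diagonal e) := by
    rw [Matrix.isUnit_iff_isUnit_det, Matrix.det_diagonal]
    exact (Finset.prod_ne_zero_iff.mpr (fun i _ => hene i)).isUnit
  have hUnit2 : IsUnit (star U) := by
    rw [Matrix.isUnit_iff_isUnit_det]
    have : star U * U = 1 := hUstar
    have hd := congrArg Matrix.det this
    rw [Matrix.det_mul, Matrix.det_one] at hd
    exact IsUnit.of_mul_eq_one _ hd
  refine ⟨diagonal e * star U, ?_, fun i => if lam i = 0 then 0 else 1, ?_, ?_⟩
  · exact hUnit1.mul hUnit2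
  · intro i; by_cases hl : lam i = 0 <;> simp [hl]
  · have hT : (diagonal e * star U)ᵀ = U * diagonal e := by
      rw [Matrix.transpose_mul, ← star_eq_transpose, star_star, Matrix.diagonal_transpose]
    rw [hT]
    have hspec : star U * C * U = diagonal lam := by
      have h2 : star U * C * U = diagonal (RCLike.ofReal ∘ h.eigenvalues) := by
        have h2' := h.conjStarAlgAut_star_eigenvectorUnitary
        rw [Unitary.conjStarAlgAut_apply, Unitary.coe_star, star_star] at h2'
        exact h2'
      have h3 : (RCLike.ofReal ∘ h.eigenvalues : Fin n → ℝ) = lam := by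
        funext i; simp [hlam]
      rw [h3] at h2
      exact h2
    have : diagonal e * star U * C * (U * diagonal e)
        = diagonal e * (star U * C * U) * diagonal e := by
      noncomm_ring
    rw [this, hspec, Matrix.diagonal_mul_diagonal, Matrix.diagonal_mul_diagonal]
    have hfun : (fun i => e i * lam i * e i) = fun i => if lam i = 0 then (0:ℝ) else 1 := by
      funext i
      show e i * lam i * e i = _
      by_cases hl : lam i = 0
      · rw [if_pos hl, hl]; ring
      · have hs : Real.sqrt (lam i) ≠ 0 :=
          Real.sqrt_ne_zero'.mpr (lt_of_le_of_ne (hlamnn i) (Ne.symm hl))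
        have hss : Real.sqrt (lam i) * Real.sqrt (lam i) = lam i := Real.mul_self_sqrt (hlamnn i)
        rw [if_neg hl, he]
        dsimp only
        rw [if_neg hl, ← hss]
        field_simp
        rw [Real.sqrt_sq (Real.sqrt_nonneg _)]
    rw [hfun]

end SimDiagAux

open SimDiagAux

/-- Two real positive semidefinite matrices can be simultaneously diagonalized
by congruence: there is an invertible `S` with `S * A * Sᵀ` and `S * B * Sᵀ` diagonal. -/
theorem simultaneous_diagonalization_by_congruence
    {n : ℕ} (A B : Matrix (Fin n) (Fin n) ℝ)
    (hA : A.PosSemidef) (hB : B.PosSemidef) :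
    ∃ S : Matrix (Fin n) (Fin n) ℝ, IsUnit S ∧
      (S * A * Sᵀ).IsDiag ∧ (S * B * Sᵀ).IsDiag := by
  classical
  obtain ⟨S₀, hS₀, d, hd01, hdiag⟩ := psd_congr_diag01 (hA.add hB)
  set A' := S₀ * A * S₀ᵀ with hA'def
  set B' := S₀ * B * S₀ᵀ with hB'def
  have hA' : A'.PosSemidef := psd_congr hA
  have hB' : B'.PosSemidef := psd_congr hB
  set D : Matrix (Fin n) (Fin n) ℝ := diagonal d with hDdef
  have hsum : A' + B' = D := by
    rw [hA'def, hB'def, ← hdiag]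
    noncomm_ring
  have hdnn : ∀ i, 0 ≤ d i := by
    intro i; rcases hd01 i with h | h <;> rw [h] <;> norm_num
  have hD : D.PosSemidef := Matrix.PosSemidef.diagonal hdnn
  -- A' vanishes on rows where d = 0
  have h0row : ∀ i j, d i = 0 → A' i j = 0 := by
    intro i j h0
    have hAB : A' i i + B' i i = 0 := by
      have h1 := congrFun (congrFun hsum i) i
      rw [hDdef] at h1
      simpa [Matrix.add_apply, h0] using h1
    have hAii : A' i i = 0 := by
      have := psd_diag_nonneg hA' i
      have := psd_diag_nonneg hB' i
      linarith
    exact psd_row_eq_zero hA' hAii j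
  have hDA : D * A' = A' := by
    ext i j
    rw [hDdef, Matrix.diagonal_mul]
    rcases hd01 i with h | h
    · rw [h, h0row i j h]; ring
    · rw [h]; ring
  have hDD : D * D = D := by
    rw [hDdef, Matrix.diagonal_mul_diagonal]
    have hdd : (fun i => d i * d i) = d := by
      funext i; rcases hd01 i with h | h <;> rw [h] <;> ring
    rw [hdd]
  set M : Matrix (Fin n) (Fin n) ℝ := A' + D with hMdef
  have hM : M.IsHermitian := hA'.1.add hD.1
  set V : Matrix (Fin n) (Fin n) ℝ := (hM.eigenvectorUnitary : Matrix (Fin n) (Fin n) ℝ) with hV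
  have hVtV : Vᵀ * V = 1 := by
    rw [← star_eq_transpose]
    exact Matrix.mem_unitaryGroup_iff'.mp hM.eigenvectorUnitary.2
  have hVVt : V * Vᵀ = 1 := by
    rw [← star_eq_transpose]
    exact Matrix.mem_unitaryGroup_iff.mp hM.eigenvectorUnitary.2
  -- each eigenvector of M is an eigenvector of A' and B'
  have claim : ∀ j, ∃ a b : ℝ,
      A' *ᵥ ⇑(hM.eigenvectorBasis j) = a • ⇑(hM.eigenvectorBasis j) ∧
      B' *ᵥ ⇑(hM.eigenvectorBasis j) = b • ⇑(hM.eigenvectorBasis j) := by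
    intro j
    set v : Fin n → ℝ := ⇑(hM.eigenvectorBasis j) with hv
    set μ : ℝ := hM.eigenvalues j with hμ
    have hMv : M *ᵥ v = μ • v := hM.mulVec_eigenvectorBasis j
    have hBeq : B' = D - A' := by rw [← hsum]; abel
    by_cases h0 : μ = 0
    · -- M v = 0, so A' v = 0 and D v = 0
      have hMv0 : M *ᵥ v = 0 := by rw [hMv, h0, zero_smul]
      have hsplit : star v ⬝ᵥ A' *ᵥ v + star v ⬝ᵥ D *ᵥ v = 0 := by
        have : star v ⬝ᵥ M *ᵥ v = 0 := by rw [hMv0, dotProduct_zero]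
        rw [hMdef, Matrix.add_mulVec, dotProduct_add] at this
        exact this
      have h1 : star v ⬝ᵥ A' *ᵥ v = 0 := by
        have := hA'.dotProduct_mulVec_nonneg v; have := hD.dotProduct_mulVec_nonneg v; linarith
      have h2 : star v ⬝ᵥ D *ᵥ v = 0 := by
        have := hA'.dotProduct_mulVec_nonneg v; have := hD.dotProduct_mulVec_nonneg v; linarith
      have hAv : A' *ᵥ v = 0 := (hA'.dotProduct_mulVec_zero_iff v).mp h1
      have hDv : D *ᵥ v = 0 := (hD.dotProduct_mulVec_zero_iff v).mp h2
      refine ⟨0, 0, by rw [hAv, zero_smul], ?_⟩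
      rw [hBeq, Matrix.sub_mulVec, hAv, hDv, zero_smul, sub_zero]
    · -- μ ≠ 0 : D v = v
      have hDMv : (D * M) *ᵥ v = M *ᵥ v := by
        have : D * M = M := by rw [hMdef, mul_add, hDA, hDD]
        rw [this]
      have hDv : D *ᵥ v = v := by
        have h1 : D *ᵥ (M *ᵥ v) = M *ᵥ v := by
          rw [Matrix.mulVec_mulVec]; exact hDMv
        rw [hMv, Matrix.mulVec_smul] at h1
        exact smul_right_injective (Fin n → ℝ) h0 h1
      have hAv : A' *ᵥ v = (μ - 1) • v := by
        have : A' = M - D := by rw [hMdef]; abel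
        rw [this, Matrix.sub_mulVec, hMv, hDv, sub_smul, one_smul]
      refine ⟨μ - 1, 2 - μ, hAv, ?_⟩
      rw [hBeq, Matrix.sub_mulVec, hDv, hAv]
      module
  choose a b ha hb using claim
  have colfact : ∀ (N : Matrix (Fin n) (Fin n) ℝ) (c : Fin n → ℝ),
      (∀ j, N *ᵥ ⇑(hM.eigenvectorBasis j) = c j • ⇑(hM.eigenvectorBasis j)) →
      Vᵀ * N * V = diagonal c := by
    intro N c hc
    have hNV : N * V = V * diagonal c := by
      ext k j
      have h1 : (N *ᵥ ⇑(hM.eigenvectorBasis j)) k = c j * (hM.eigenvectorBasis j) k := by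
        rw [hc j]; rfl
      calc (N * V) k j = (N *ᵥ ⇑(hM.eigenvectorBasis j)) k := by
            simp [Matrix.mul_apply, mulVec, dotProduct, hV,
              Matrix.IsHermitian.eigenvectorUnitary_apply]
      _ = c j * (hM.eigenvectorBasis j) k := h1
      _ = (V * diagonal c) k j := by
            rw [Matrix.mul_diagonal, mul_comm]
            simp [hV, Matrix.IsHermitian.eigenvectorUnitary_apply]
    rw [Matrix.mul_assoc, hNV, ← Matrix.mul_assoc, hVtV, one_mul]
  have hT : (Vᵀ * S₀)ᵀ = S₀ᵀ * V := by rw [Matrix.transpose_mul, Matrix.transpose_transpose]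
  have hVunit : IsUnit Vᵀ := by
    rw [Matrix.isUnit_iff_isUnit_det]
    have hdet := congrArg Matrix.det hVtV
    rw [Matrix.det_mul, Matrix.det_one] at hdet
    exact IsUnit.of_mul_eq_one _ hdet
  refine ⟨Vᵀ * S₀, hVunit.mul hS₀, ?_, ?_⟩
  · have h2 : Vᵀ * S₀ * A * (S₀ᵀ * V) = Vᵀ * A' * V := by rw [hA'def]; noncomm_ring
    rw [hT, h2, colfact A' a ha]
    exact Matrix.isDiag_diagonal a
  · have h2 : Vᵀ * S₀ * B * (S₀ᵀ * V) = Vᵀ * B' * V := by rw [hB'def]; noncomm_ring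
    rw [hT, h2, colfact B' b hb]
    exact Matrix.isDiag_diagonal b
end

section
/- Let M be an n×n real symmetric matrix with M ⪯ L, where L = I − (R+I)⁻¹ and R is symmetric positive definite (so 0 ⪯ L ≺ I). Then I − M is invertible, and the matrix C = (I − M)⁻¹ − I satisfies: C ⪰ 0 if and only if M ⪰ 0, and C ⪯ R. -/
open Matrix

/-- Inverse is antitone on positive definite real matrices. -/
lemma posdef_inv_antitone {n : ℕ} {A B : Matrix (Fin n) (Fin n) ℝ}
    (hA : A.PosDef) (hB : B.PosDef) (h : (B - A).PosSemidef) :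
    (A⁻¹ - B⁻¹).PosSemidef := by
  have hAd : IsUnit A.det := isUnit_iff_isUnit_det _ |>.1 hA.isUnit
  have hBd : IsUnit B.det := isUnit_iff_isUnit_det _ |>.1 hB.isUnit
  refine PosSemidef.of_dotProduct_mulVec_nonneg (hA.inv.isHermitian.sub hB.inv.isHermitian) fun x => ?_
  have hsx : star x = x := by funext i; simp
  set z : Fin n → ℝ := A⁻¹ *ᵥ x with hz
  set y : Fin n → ℝ := B⁻¹ *ᵥ x with hy
  have hAz : A *ᵥ z = x := by rw [hz, mulVec_mulVec, mul_nonsing_inv _ hAd, one_mulVec]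
  have hBy : B *ᵥ y = x := by rw [hy, mulVec_mulVec, mul_nonsing_inv _ hBd, one_mulVec]
  -- symmetric dotProduct lemma
  have hsymm : ∀ (C : Matrix (Fin n) (Fin n) ℝ), C.IsHermitian → ∀ u v : Fin n → ℝ,
      u ⬝ᵥ C *ᵥ v = (C *ᵥ u) ⬝ᵥ v := by
    intro C hC u v
    rw [dotProduct_mulVec, ← mulVec_transpose]
    congr 1
    rw [← conjTranspose_eq_transpose_of_trivial, hC.eq]
  have key : 0 ≤ (y - z) ⬝ᵥ A *ᵥ (y - z) := by
    have := hA.posSemidef.dotProduct_mulVec_nonneg (y - z)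
    simpa using this
  have expand : (y - z) ⬝ᵥ A *ᵥ (y - z)
      = y ⬝ᵥ A *ᵥ y - 2 * (x ⬝ᵥ y) + x ⬝ᵥ z := by
    rw [mulVec_sub, dotProduct_sub, sub_dotProduct, sub_dotProduct]
    have h1 : y ⬝ᵥ A *ᵥ z = y ⬝ᵥ x := by rw [hAz]
    have h2 : z ⬝ᵥ A *ᵥ y = x ⬝ᵥ y := by rw [hsymm A hA.isHermitian, hAz]
    have h3 : z ⬝ᵥ A *ᵥ z = x ⬝ᵥ z := by rw [hsymm A hA.isHermitian, hAz]
    rw [h1, h2, h3, dotProduct_comm y x]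
    ring
  have hxy : x ⬝ᵥ y = y ⬝ᵥ A *ᵥ y + (y ⬝ᵥ (B - A) *ᵥ y) := by
    have : x ⬝ᵥ y = y ⬝ᵥ B *ᵥ y := by
      rw [hsymm B hB.isHermitian, hBy]
    rw [this, sub_mulVec, dotProduct_sub]; ring
  have hBA : 0 ≤ y ⬝ᵥ (B - A) *ᵥ y := by
    have := h.dotProduct_mulVec_nonneg y; simpa using this
  have goal1 : x ⬝ᵥ y ≤ x ⬝ᵥ z := by nlinarith [key, expand, hxy, hBA]
  calc (0:ℝ) ≤ x ⬝ᵥ z - x ⬝ᵥ y := by linarith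
    _ = star x ⬝ᵥ (A⁻¹ - B⁻¹) *ᵥ x := by
        rw [hsx, sub_mulVec, dotProduct_sub, hz, hy]

/-- If `M` is symmetric with `M ⪯ L := I − (R+I)⁻¹` for a symmetric positive
definite `R`, then `I − M` is invertible and `C := (I−M)⁻¹ − I` satisfies
`C ⪰ 0 ↔ M ⪰ 0` and `C ⪯ R`. -/
theorem gaussian_covariance_from_mmse
    {n : ℕ} (R M : Matrix (Fin n) (Fin n) ℝ)
    (hR : R.PosDef) (hM : M.IsHermitian)
    (hML : ((1 - (R + 1)⁻¹) - M).PosSemidef) :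
    IsUnit (1 - M) ∧
    (((1 - M)⁻¹ - 1).PosSemidef ↔ M.PosSemidef) ∧
    (R - ((1 - M)⁻¹ - 1)).PosSemidef := by
  have hR1 : (R + 1).PosDef := hR.add_posSemidef PosDef.one.posSemidef
  have hK : ((R + 1)⁻¹).PosDef := hR1.inv
  have hA : (1 - M).PosDef := by
    have := Matrix.PosDef.posSemidef_add hML hK
    have e : (1 - (R + 1)⁻¹ - M) + (R + 1)⁻¹ = 1 - M := by abel
    rwa [e] at this
  have hAd : IsUnit (1 - M).det := isUnit_iff_isUnit_det _ |>.1 hA.isUnit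
  have hAinv : (1 - M) * (1 - M)⁻¹ = 1 := mul_nonsing_inv _ hAd
  refine ⟨hA.isUnit, ?_, ?_⟩
  · constructor
    · intro hC
      have h1 := hC.mul_mul_conjTranspose_same (1 - M)
      have e1 : (1 - M) * ((1 - M)⁻¹ - 1) * (1 - M)ᴴ = M - M * M := by
        have h0 : (1 - M) * ((1 - M)⁻¹ - 1) = 1 - (1 - M) := by
          rw [mul_sub, mul_one, hAinv]
        rw [hA.isHermitian.eq, h0]
        noncomm_ring
      rw [e1] at h1
      have h2 : (M * M).PosSemidef := by
        have := posSemidef_conjTranspose_mul_self M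
        rwa [hM.eq] at this
      have := h1.add h2
      have e2 : (M - M * M) + M * M = M := by abel
      rwa [e2] at this
    · intro hMp
      have h1 : ((1 : Matrix (Fin n) (Fin n) ℝ) - (1 - M)).PosSemidef := by
        have e : (1 : Matrix (Fin n) (Fin n) ℝ) - (1 - M) = M := by abel
        rwa [e]
      have := posdef_inv_antitone hA PosDef.one h1
      rwa [inv_one] at this
  · have h1 : ((1 - M) - (R + 1)⁻¹).PosSemidef := by
      have e : (1 - (R + 1)⁻¹ - M) = (1 - M) - (R + 1)⁻¹ := by abel
      rwa [e] at hML
    have h2 := posdef_inv_antitone hK hA h1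
    have hKd : IsUnit ((R + 1)⁻¹).det := isUnit_iff_isUnit_det _ |>.1 hK.isUnit
    rw [nonsing_inv_nonsing_inv _ (isUnit_iff_isUnit_det _ |>.1 hR1.isUnit)] at h2
    have e : (R + 1) - (1 - M)⁻¹ = R - ((1 - M)⁻¹ - 1) := by abel
    rwa [e] at h2
end
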